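/- In the case that both i and j are odd elements of ℤ/4m, there exist α ∈ [i]_m, β ∈ [j]_m, γ ∈ [k]_m with α+β+γ ≡ 0 (mod 2π) if and only if k ∈ {-i-j-1, -i-j, -i-j+1} in ℤ/4m. -/

import Mathlib

open Real Complex

/-- The OPRA_m sector `[i]_m` as a subset of the circle `ℝ/2πℤ` (`Real.Angle`):
an open arc if `i` is odd, a single point if `i` is even. -/
noncomputable def sector (m : ℕ) (i : ZMod (4*m)) : Set Real.Angle :=
  if Odd i.val then
    (fun r : ℝ => (r : Real.Angle)) ''
      Set.Ioo (2*π*((i.val : ℝ)-1)/(4*m)) (2*π*((i.val : ℝ)+1)/(4*m))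
  else {((2*π*(i.val : ℝ)/(4*m) : ℝ) : Real.Angle)}

/-- The direction angle `φ_XY` of the vector `Y - X`, as an element of the circle. -/
noncomputable def phiAngle (X Y : ℂ) : Real.Angle := (Complex.arg (Y - X) : Real.Angle)

/-- An o-point: a point of the plane (modeled as `ℂ`) with an orientation. -/
abbrev OPoint := ℂ × Real.Angle

/-- The distinct-position OPRA_m base relation `A ∠_i^j B`. -/
noncomputable def oprarel (m : ℕ) (i j : ZMod (4*m)) (A B : OPoint) : Prop :=
  A.1 ≠ B.1 ∧ phiAngle A.1 B.1 - A.2 ∈ sector m i ∧ phiAngle B.1 A.1 - B.2 ∈ sector m j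

/-- The same-position OPRA_m base relation `A ∠i B`. -/
noncomputable def oprasame (m : ℕ) (i : ZMod (4*m)) (A B : OPoint) : Prop :=
  A.1 = B.1 ∧ B.2 - A.2 ∈ sector m i

/-- `turn_m(i,j,k)`. -/
def turnRel (m : ℕ) (i j k : ZMod (4*m)) : Prop :=
  if Odd i.val ∧ Odd j.val then i + j + k = 0 ∨ i + j + k = 1 ∨ i + j + k = -1
  else i + j + k = 0

/-- `sign_m(i)`. -/
def signm (m : ℕ) (i : ZMod (4*m)) : ℤ :=
  if i.val = 0 ∨ i.val = 2*m then 0 else if i.val < 2*m then 1 else -1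

/-- `triangle_m(i,j,k)`. -/
def triRel (m : ℕ) (i j k : ZMod (4*m)) : Prop :=
  turnRel m i j (k - ((2*m : ℕ) : ZMod (4*m))) ∧
  ¬(i = ((2*m : ℕ) : ZMod (4*m)) ∧ j = ((2*m : ℕ) : ZMod (4*m)) ∧ k = ((2*m : ℕ) : ZMod (4*m))) ∧
  signm m i = signm m j ∧ signm m j = signm m k

/-- The sign of an angle, where both `0` and `π` get sign `0`. -/
noncomputable def angsign (θ : Real.Angle) : ℤ := by
  classical exact if θ.toReal = 0 ∨ θ.toReal = π then 0 else if 0 < θ.toReal then 1 else -1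

/- ### Auxiliary lemmas -/

lemma two_pi_int_angle (t : ℤ) : ((2*π*t : ℝ) : Real.Angle) = 0 := by
  have : ((2*π*t : ℝ) : Real.Angle) = ((0:ℝ) : Real.Angle) := by
    rw [Real.Angle.angle_eq_iff_two_pi_dvd_sub]; exact ⟨t, by ring⟩
  simpa using this

lemma val_sum_castZ (m : ℕ) [NeZero (4*m)] (i j k : ZMod (4*m)) :
    (((i.val : ℤ) + j.val + k.val : ℤ) : ZMod (4*m)) = i + j + k := by
  push_cast [ZMod.natCast_val, ZMod.cast_id]; rfl

lemma four_mn_cast (m : ℕ) (n : ℤ) : ((4*(m:ℤ)*n : ℤ) : ZMod (4*m)) = 0 := by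
  have h : ((4*m : ℕ) : ZMod (4*m)) = 0 := ZMod.natCast_self _
  push_cast at h ⊢
  rw [h, zero_mul]

lemma mem_sector_of (m : ℕ) (hm : 1 ≤ m) (i : ZMod (4*m)) (hi : Odd i.val) (x : ℝ)
    (h1 : (i.val:ℝ) - 1 < x) (h2 : x < (i.val:ℝ) + 1) :
    ((2*π*x/(4*m) : ℝ) : Real.Angle) ∈ sector m i := by
  have hm4 : (0:ℝ) < 4*m := by
    have : (0:ℕ) < 4*m := by omega
    exact_mod_cast this
  have hπ := Real.pi_pos
  rw [sector, if_pos hi]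
  exact ⟨2*π*x/(4*m), ⟨(div_lt_div_iff_of_pos_right hm4).2 (by nlinarith),
    (div_lt_div_iff_of_pos_right hm4).2 (by nlinarith)⟩, rfl⟩

lemma sum_angle_zero (m : ℕ) (hm : 1 ≤ m) (x y z : ℝ) (t : ℤ) (h : x + y + z = 4*m*t) :
    ((2*π*x/(4*m) : ℝ) : Real.Angle) + ((2*π*y/(4*m) : ℝ) : Real.Angle)
      + ((2*π*z/(4*m) : ℝ) : Real.Angle) = 0 := by
  have hm4 : ((4:ℝ)*m) ≠ 0 := by
    have : (0:ℕ) < 4*m := by omega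
    have : (0:ℝ) < 4*m := by exact_mod_cast this
    linarith
  rw [← Real.Angle.coe_add, ← Real.Angle.coe_add]
  have e : 2*π*x/(4*m) + 2*π*y/(4*m) + 2*π*z/(4*m) = 2*π*t := by
    field_simp
    linear_combination h
  rw [e]; exact two_pi_int_angle t

/-- the odd-odd case of the `turn_m` characterization. -/
theorem stmt6 (m : ℕ) (hm : 1 ≤ m) (i j k : ZMod (4*m))
    (hi : Odd i.val) (hj : Odd j.val) :
    (∃ α ∈ sector m i, ∃ β ∈ sector m j, ∃ γ ∈ sector m k, α + β + γ = 0) ↔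
      (k = -i - j - 1 ∨ k = -i - j ∨ k = -i - j + 1) := by
  haveI : NeZero (4*m) := ⟨by omega⟩
  have hm4 : (0:ℝ) < 4*m := by
    have : (0:ℕ) < 4*m := by omega
    exact_mod_cast this
  have hπ := Real.pi_pos
  have h2π : (0:ℝ) < 2*π := by linarith
  obtain ⟨p, hp⟩ := hi
  obtain ⟨q, hq⟩ := hj
  have hip : (i.val:ℤ) = 2*p+1 := by exact_mod_cast hp
  have hjp : (j.val:ℤ) = 2*q+1 := by exact_mod_cast hq
  constructor
  · rintro ⟨α, hα, β, hβ, γ, hγ, hsum⟩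
    rw [sector, if_pos ⟨p, hp⟩] at hα
    rw [sector, if_pos ⟨q, hq⟩] at hβ
    obtain ⟨a, ⟨ha1, ha2⟩, rfl⟩ := hα
    obtain ⟨b, ⟨hb1, hb2⟩, rfl⟩ := hβ
    by_cases hk : Odd k.val
    · -- k odd
      rw [sector, if_pos hk] at hγ
      obtain ⟨c, ⟨hc1, hc2⟩, rfl⟩ := hγ
      rw [← Real.Angle.coe_add, ← Real.Angle.coe_add] at hsum
      rw [show (0 : Real.Angle) = ((0:ℝ) : Real.Angle) from rfl,
        Real.Angle.angle_eq_iff_two_pi_dvd_sub] at hsum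
      obtain ⟨n, hn⟩ := hsum
      have hL : 2*π*(((i.val:ℝ) + j.val + k.val) - 3)/(4*m) < 2*π*n := by
        have e : 2*π*((i.val:ℝ)-1)/(4*m) + 2*π*((j.val:ℝ)-1)/(4*m)
            + 2*π*((k.val:ℝ)-1)/(4*m)
            = 2*π*(((i.val:ℝ) + j.val + k.val) - 3)/(4*m) := by ring
        linarith
      have hU : 2*π*n < 2*π*(((i.val:ℝ) + j.val + k.val) + 3)/(4*m) := by
        have e : 2*π*((i.val:ℝ)+1)/(4*m) + 2*π*((j.val:ℝ)+1)/(4*m)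
            + 2*π*((k.val:ℝ)+1)/(4*m)
            = 2*π*(((i.val:ℝ) + j.val + k.val) + 3)/(4*m) := by ring
        linarith
      have hLi : (((i.val:ℝ) + j.val + k.val) - 3) < n*(4*m) := by
        have h' : 2*π*((((i.val:ℝ) + j.val + k.val) - 3)) < 2*π*((n:ℝ)*(4*m)) := by
          linear_combination (div_lt_iff₀ hm4).1 hL
        exact (mul_lt_mul_iff_of_pos_left h2π).1 h'
      have hUi : (n:ℝ)*(4*m) < (((i.val:ℝ) + j.val + k.val) + 3) := by
        have h' : 2*π*((n:ℝ)*(4*m)) < 2*π*((((i.val:ℝ) + j.val + k.val) + 3)) := by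
          linear_combination (lt_div_iff₀ hm4).1 hU
        exact (mul_lt_mul_iff_of_pos_left h2π).1 h'
      have hZL : ((i.val:ℤ) + j.val + k.val) - 3 < n*(4*m) := by exact_mod_cast hLi
      have hZU : (n:ℤ)*(4*m) < ((i.val:ℤ) + j.val + k.val) + 3 := by exact_mod_cast hUi
      obtain ⟨r, hr⟩ := hk
      have hkp : (k.val:ℤ) = 2*r+1 := by exact_mod_cast hr
      set E : ℤ := (m:ℤ)*n with hEdef
      have hE : (n:ℤ)*(4*m) = 4*E := by rw [hEdef]; ring
      rw [hE] at hZL hZU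
      have h4E : ((4*E : ℤ) : ZMod (4*m)) = 0 := by
        rw [show (4*E : ℤ) = 4*(m:ℤ)*n from by rw [hEdef]; ring]
        exact four_mn_cast m n
      have hcastZ := val_sum_castZ m i j k
      have hD : (i.val:ℤ) + j.val + k.val = 4*E - 1 ∨
          (i.val:ℤ) + j.val + k.val = 4*E + 1 := by omega
      rcases hD with hD | hD
      · left
        have hk' : i + j + k = -1 := by
          rw [← hcastZ, hD]
          push_cast
          push_cast at h4E
          rw [h4E]; ring
        linear_combination hk'
      · right; right
        have hk' : i + j + k = 1 := by
          rw [← hcastZ, hD]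
          push_cast
          push_cast at h4E
          rw [h4E]; ring
        linear_combination hk'
    · -- k even
      rw [sector, if_neg hk] at hγ
      rw [Set.mem_singleton_iff] at hγ
      subst hγ
      rw [← Real.Angle.coe_add, ← Real.Angle.coe_add] at hsum
      rw [show (0 : Real.Angle) = ((0:ℝ) : Real.Angle) from rfl,
        Real.Angle.angle_eq_iff_two_pi_dvd_sub] at hsum
      obtain ⟨n, hn⟩ := hsum
      have hL : 2*π*(((i.val:ℝ) + j.val + k.val) - 2)/(4*m) < 2*π*n := by
        have e : 2*π*((i.val:ℝ)-1)/(4*m) + 2*π*((j.val:ℝ)-1)/(4*m)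
            + 2*π*(k.val:ℝ)/(4*m)
            = 2*π*(((i.val:ℝ) + j.val + k.val) - 2)/(4*m) := by ring
        linarith
      have hU : 2*π*n < 2*π*(((i.val:ℝ) + j.val + k.val) + 2)/(4*m) := by
        have e : 2*π*((i.val:ℝ)+1)/(4*m) + 2*π*((j.val:ℝ)+1)/(4*m)
            + 2*π*(k.val:ℝ)/(4*m)
            = 2*π*(((i.val:ℝ) + j.val + k.val) + 2)/(4*m) := by ring
        linarith
      have hLi : (((i.val:ℝ) + j.val + k.val) - 2) < n*(4*m) := by
        have h' : 2*π*((((i.val:ℝ) + j.val + k.val) - 2)) < 2*π*((n:ℝ)*(4*m)) := by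
          linear_combination (div_lt_iff₀ hm4).1 hL
        exact (mul_lt_mul_iff_of_pos_left h2π).1 h'
      have hUi : (n:ℝ)*(4*m) < (((i.val:ℝ) + j.val + k.val) + 2) := by
        have h' : 2*π*((n:ℝ)*(4*m)) < 2*π*((((i.val:ℝ) + j.val + k.val) + 2)) := by
          linear_combination (lt_div_iff₀ hm4).1 hU
        exact (mul_lt_mul_iff_of_pos_left h2π).1 h'
      have hZL : ((i.val:ℤ) + j.val + k.val) - 2 < n*(4*m) := by exact_mod_cast hLi
      have hZU : (n:ℤ)*(4*m) < ((i.val:ℤ) + j.val + k.val) + 2 := by exact_mod_cast hUi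
      have hkev : (k.val:ℤ) % 2 = 0 := by
        rw [Nat.not_odd_iff_even] at hk
        obtain ⟨r, hr⟩ := hk
        omega
      set E : ℤ := (m:ℤ)*n with hEdef
      have hE : (n:ℤ)*(4*m) = 4*E := by rw [hEdef]; ring
      rw [hE] at hZL hZU
      have h4E : ((4*E : ℤ) : ZMod (4*m)) = 0 := by
        rw [show (4*E : ℤ) = 4*(m:ℤ)*n from by rw [hEdef]; ring]
        exact four_mn_cast m n
      have hcastZ := val_sum_castZ m i j k
      have hD : (i.val:ℤ) + j.val + k.val = 4*E := by omega
      right; left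
      have hk' : i + j + k = 0 := by
        rw [← hcastZ, hD]
        exact h4E
      linear_combination hk'
  · -- converse
    rintro (hK | hK | hK)
    · -- k = -i - j - 1
      have hs0 : (((k.val:ℤ) + i.val + j.val + 1 : ℤ) : ZMod (4*m)) = 0 := by
        push_cast [ZMod.natCast_val, ZMod.cast_id]
        rw [hK]; ring
      rw [ZMod.intCast_zmod_eq_zero_iff_dvd] at hs0
      obtain ⟨t, ht⟩ := hs0
      have hko : k.val % 2 = 1 := by
        have hF : ((4*m:ℕ):ℤ)*t = 4*((m:ℤ)*t) := by push_cast; ring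
        rw [hF] at ht
        set F : ℤ := (m:ℤ)*t
        omega
      have hkodd : Odd k.val := Nat.odd_iff.2 hko
      refine ⟨_, mem_sector_of m hm i ⟨p, hp⟩ ((i.val:ℝ) + 1/4) (by linarith) (by linarith),
        _, mem_sector_of m hm j ⟨q, hq⟩ ((j.val:ℝ) + 1/4) (by linarith) (by linarith),
        _, mem_sector_of m hm k hkodd ((k.val:ℝ) + 1/2) (by linarith) (by linarith), ?_⟩
      refine sum_angle_zero m hm _ _ _ t ?_
      have : ((k.val:ℝ) + i.val + j.val + 1) = 4*m*t := by
        exact_mod_cast congrArg (fun z : ℤ => (z:ℝ)) ht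
      linarith
    · -- k = -i - j
      have hs0 : (((k.val:ℤ) + i.val + j.val : ℤ) : ZMod (4*m)) = 0 := by
        push_cast [ZMod.natCast_val, ZMod.cast_id]
        rw [hK]; ring
      rw [ZMod.intCast_zmod_eq_zero_iff_dvd] at hs0
      obtain ⟨t, ht⟩ := hs0
      have hko : k.val % 2 = 0 := by
        have hF : ((4*m:ℕ):ℤ)*t = 4*((m:ℤ)*t) := by push_cast; ring
        rw [hF] at ht
        set F : ℤ := (m:ℤ)*t
        omega
      have hkev : ¬ Odd k.val := by
        rw [Nat.odd_iff]; omega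
      refine ⟨_, mem_sector_of m hm i ⟨p, hp⟩ ((i.val:ℝ)) (by linarith) (by linarith),
        _, mem_sector_of m hm j ⟨q, hq⟩ ((j.val:ℝ)) (by linarith) (by linarith),
        ((2*π*(k.val:ℝ)/(4*m) : ℝ) : Real.Angle), ?_, ?_⟩
      · rw [sector, if_neg hkev]; exact rfl
      · refine sum_angle_zero m hm _ _ _ t ?_
        have : ((k.val:ℝ) + i.val + j.val) = 4*m*t := by
          exact_mod_cast congrArg (fun z : ℤ => (z:ℝ)) ht
        linarith
    · -- k = -i - j + 1
      have hs0 : (((k.val:ℤ) + i.val + j.val - 1 : ℤ) : ZMod (4*m)) = 0 := by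
        push_cast [ZMod.natCast_val, ZMod.cast_id]
        rw [hK]; ring
      rw [ZMod.intCast_zmod_eq_zero_iff_dvd] at hs0
      obtain ⟨t, ht⟩ := hs0
      have hko : k.val % 2 = 1 := by
        have hF : ((4*m:ℕ):ℤ)*t = 4*((m:ℤ)*t) := by push_cast; ring
        rw [hF] at ht
        set F : ℤ := (m:ℤ)*t
        omega
      have hkodd : Odd k.val := Nat.odd_iff.2 hko
      refine ⟨_, mem_sector_of m hm i ⟨p, hp⟩ ((i.val:ℝ) - 1/4) (by linarith) (by linarith),
        _, mem_sector_of m hm j ⟨q, hq⟩ ((j.val:ℝ) - 1/4) (by linarith) (by linarith),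
        _, mem_sector_of m hm k hkodd ((k.val:ℝ) - 1/2) (by linarith) (by linarith), ?_⟩
      refine sum_angle_zero m hm _ _ _ t ?_
      have : ((k.val:ℝ) + i.val + j.val - 1) = 4*m*t := by
        exact_mod_cast congrArg (fun z : ℤ => (z:ℝ)) ht
      linarith
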